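/- For n ≥ 3, χ_dom(K_n) = n, and for any vertex v of K_n, the graph K_n ⊙ v is the star S_n with χ_dom(K_n ⊙ v) = 2; hence the ratio χ_dom(G)/χ_dom(G ⊙ v) can be made arbitrarily large over connected graphs G. -/

import Mathlib

open SimpleGraph

/-- A coloring is a dominated coloring if every (nonempty) color class is contained
in the open neighborhood of some vertex. -/
def IsDomColoring {V α : Type*} (G : SimpleGraph V) (C : G.Coloring α) : Prop :=
  ∀ c : α, (∃ u, C u = c) → ∃ v, ∀ u, C u = c → G.Adj v u

/-- The dominated chromatic number of a graph: the least number of colors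
in a dominated coloring. -/
noncomputable def domChromatic {V : Type*} (G : SimpleGraph V) : ℕ :=
  sInf {n | ∃ C : G.Coloring (Fin n), IsDomColoring G C}

/-- Contraction of the edge uv: delete v, and attach all of v's neighbors to u. -/
def contractEdge {V : Type*} (G : SimpleGraph V) (u v : V) : SimpleGraph {w : V // w ≠ v} where
  Adj a b := a ≠ b ∧ (G.Adj a b ∨ (a.val = u ∧ G.Adj v b) ∨ (b.val = u ∧ G.Adj a v))
  symm := ⟨by
    rintro a b ⟨hne, h | ⟨ha, hb⟩ | ⟨hb, ha⟩⟩
    · exact ⟨hne.symm, Or.inl h.symm⟩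
    · exact ⟨hne.symm, Or.inr (Or.inr ⟨ha, hb.symm⟩)⟩
    · exact ⟨hne.symm, Or.inr (Or.inl ⟨hb, ha.symm⟩)⟩⟩
  loopless := ⟨fun a => by rintro ⟨hne, -⟩; exact hne rfl⟩

/-- Contraction of a vertex v: delete v and put a clique on its (open) neighborhood. -/
def contractVertex {V : Type*} (G : SimpleGraph V) (v : V) : SimpleGraph {w : V // w ≠ v} where
  Adj a b := a ≠ b ∧ (G.Adj a b ∨ (G.Adj v a ∧ G.Adj v b))
  symm := ⟨by
    rintro a b ⟨hne, h | ⟨ha, hb⟩⟩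
    · exact ⟨hne.symm, Or.inl h.symm⟩
    · exact ⟨hne.symm, Or.inr ⟨hb, ha⟩⟩⟩
  loopless := ⟨fun a => by rintro ⟨hne, -⟩; exact hne rfl⟩

/-- G ⊙ v : remove from G all edges joining two neighbors of v. -/
def odot {V : Type*} (G : SimpleGraph V) (v : V) : SimpleGraph V where
  Adj a b := G.Adj a b ∧ ¬(G.Adj v a ∧ G.Adj v b)
  symm := ⟨by rintro a b ⟨h, hn⟩; exact ⟨h.symm, fun ⟨x, y⟩ => hn ⟨y, x⟩⟩⟩
  loopless := ⟨fun a => by rintro ⟨h, -⟩; exact G.ne_of_adj h rfl⟩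

lemma domChromatic_top (n : ℕ) (hn : 2 ≤ n) :
    domChromatic (⊤ : SimpleGraph (Fin n)) = n := by
  have hmem : n ∈ {m | ∃ C : (⊤ : SimpleGraph (Fin n)).Coloring (Fin m),
      IsDomColoring ⊤ C} := by
    refine ⟨SimpleGraph.Coloring.mk id (fun {a b} h => h.ne), ?_⟩
    intro c _
    obtain ⟨d, hd⟩ := Fintype.exists_ne_of_one_lt_card
      (α := Fin n) (by simp; omega) c
    refine ⟨d, fun u hu => ?_⟩
    have : u = c := hu
    subst this
    exact (top_adj d u).mpr (fun h => hd h)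
  have hlb : ∀ m ∈ {m | ∃ C : (⊤ : SimpleGraph (Fin n)).Coloring (Fin m),
      IsDomColoring ⊤ C}, n ≤ m := by
    rintro m ⟨C, -⟩
    have hinj : Function.Injective C := by
      intro a b hab
      by_contra hne
      exact C.valid ((top_adj a b).mpr hne) hab
    simpa using Fintype.card_le_of_injective C hinj
  have h1 := Nat.sInf_le hmem
  have h2 := hlb _ (Nat.sInf_mem ⟨n, hmem⟩)
  exact le_antisymm h1 h2

lemma domChromatic_odot_top (n : ℕ) (hn : 2 ≤ n) (v : Fin n) :
    domChromatic (odot (⊤ : SimpleGraph (Fin n)) v) = 2 := by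
  obtain ⟨w, hw⟩ : ∃ w : Fin n, w ≠ v :=
    Fintype.exists_ne_of_one_lt_card (α := Fin n) (by simp; omega) v
  have adj_iff : ∀ a b : Fin n, (odot (⊤ : SimpleGraph (Fin n)) v).Adj a b ↔
      a ≠ b ∧ (a = v ∨ b = v) := by
    intro a b
    change (⊤ : SimpleGraph (Fin n)).Adj a b ∧ ¬((⊤ : SimpleGraph (Fin n)).Adj v a ∧ (⊤ : SimpleGraph (Fin n)).Adj v b) ↔ _
    constructor
    · rintro ⟨h1, h2⟩
      refine ⟨(top_adj a b).mp h1, ?_⟩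
      by_contra hc
      push_neg at hc
      exact h2 ⟨(top_adj v a).mpr (Ne.symm hc.1), (top_adj v b).mpr (Ne.symm hc.2)⟩
    · rintro ⟨hne, h | h⟩
      · exact ⟨(top_adj a b).mpr hne, fun ⟨h1, _⟩ => ((top_adj v a).mp h1) h.symm⟩
      · exact ⟨(top_adj a b).mpr hne, fun ⟨_, h2⟩ => ((top_adj v b).mp h2) h.symm⟩
  have hmem : 2 ∈ {m | ∃ C : (odot (⊤ : SimpleGraph (Fin n)) v).Coloring (Fin m),
      IsDomColoring _ C} := by
    have hvalid : ∀ {a b}, (odot (⊤ : SimpleGraph (Fin n)) v).Adj a b →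
        (fun u => if u = v then (0 : Fin 2) else 1) a ≠
        (fun u => if u = v then (0 : Fin 2) else 1) b := by
      intro a b hab
      rcases (adj_iff a b).mp hab with ⟨hne, h | h⟩
      · subst h; simp [Ne.symm hne]
      · subst h; simp [hne]
    refine ⟨SimpleGraph.Coloring.mk _ hvalid, ?_⟩
    intro c _
    by_cases hc : c = 0
    · subst hc
      refine ⟨w, fun u hu => ?_⟩
      have hu' : (if u = v then (0 : Fin 2) else 1) = 0 := hu
      have : u = v := by by_contra h; simp [h] at hu'
      subst this
      exact (adj_iff w u).mpr ⟨hw, Or.inr rfl⟩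
    · refine ⟨v, fun u hu => ?_⟩
      have hu' : (if u = v then (0 : Fin 2) else 1) = c := hu
      have huv : u ≠ v := by rintro rfl; simp at hu'; exact hc hu'.symm
      exact (adj_iff v u).mpr ⟨Ne.symm huv, Or.inl rfl⟩
  have hne0 : (0 : ℕ) ∉ {m | ∃ C : (odot (⊤ : SimpleGraph (Fin n)) v).Coloring (Fin m),
      IsDomColoring _ C} := by
    rintro ⟨C, -⟩
    exact (C v).elim0
  have hne1 : (1 : ℕ) ∉ {m | ∃ C : (odot (⊤ : SimpleGraph (Fin n)) v).Coloring (Fin m),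
      IsDomColoring _ C} := by
    rintro ⟨C, -⟩
    exact C.valid ((adj_iff w v).mpr ⟨hw, Or.inr rfl⟩) (Subsingleton.elim _ _)
  have h1 := Nat.sInf_le hmem
  have h2 := Nat.sInf_mem (⟨2, hmem⟩ : Set.Nonempty _)
  have h3 : sInf {m | ∃ C : (odot (⊤ : SimpleGraph (Fin n)) v).Coloring (Fin m),
      IsDomColoring _ C} ≠ 0 := fun h => hne0 (h ▸ h2)
  have h4 : sInf {m | ∃ C : (odot (⊤ : SimpleGraph (Fin n)) v).Coloring (Fin m),
      IsDomColoring _ C} ≠ 1 := fun h => hne1 (h ▸ h2)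
  unfold domChromatic
  omega

theorem domChromatic_complete_odot (n : ℕ) (hn : 3 ≤ n) :
    domChromatic (⊤ : SimpleGraph (Fin n)) = n ∧
    (∀ v : Fin n, domChromatic (odot (⊤ : SimpleGraph (Fin n)) v) = 2) ∧
    ∀ N : ℕ, ∃ (V : Type) (G : SimpleGraph V) (v : V), G.Connected ∧
      (N : ℚ) ≤ (domChromatic G : ℚ) / (domChromatic (odot G v) : ℚ) := by
  refine ⟨domChromatic_top n (by omega), fun v => domChromatic_odot_top n (by omega) v, ?_⟩
  intro N
  refine ⟨Fin (2 * N + 3), ⊤, 0, ?_, ?_⟩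
  · constructor
    intro a b
    by_cases h : a = b
    · subst h; rfl
    · exact ((top_adj a b).mpr h).reachable
  · rw [domChromatic_top (2 * N + 3) (by omega),
      domChromatic_odot_top (2 * N + 3) (by omega) 0]
    rw [le_div_iff₀ (by norm_num)]
    push_cast
    linarith
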